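/- For 1 <= i < j <= n-1, the number G_1([a,b]) of complete Gessel words of length 2n with 1bar at position a and 1 at position b satisfies G_1([2i,2j]) = G_1([2i,2j+1]) = G_1([2i+1,2j]) = G_1([2i+1,2j+1]). -/

import Mathlib

/-- The alphabet of Gessel words: letters `1`, `2`, `1̄`, `2̄`. -/
inductive GLetter | one | two | onebar | twobar
deriving DecidableEq

instance instFintypeGLetter : Fintype GLetter where
  elems := {.one, .two, .onebar, .twobar}
  complete := by intro x; cases x <;> simp

open Classical

/-- Number of occurrences of the letter `x` among the first `k` letters of `w`. -/
noncomputable def cnt (m : ℕ) (w : Fin m → GLetter) (x : GLetter) (k : ℕ) : ℕ :=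
  (Finset.univ.filter (fun i : Fin m => (i : ℕ) < k ∧ w i = x)).card

/-- Gessel word condition: every prefix has `N₂ ≥ N_{2̄}` and `N₁+N₂ ≥ N_{1̄}+N_{2̄}`. -/
def IsGessel (m : ℕ) (w : Fin m → GLetter) : Prop :=
  ∀ k ≤ m, cnt m w .twobar k ≤ cnt m w .two k ∧
    cnt m w .onebar k + cnt m w .twobar k ≤ cnt m w .one k + cnt m w .two k

/-- Complete: equally many occurrences of each letter and its bar. -/
def IsCompleteGW (m : ℕ) (w : Fin m → GLetter) : Prop :=
  cnt m w .one m = cnt m w .onebar m ∧ cnt m w .two m = cnt m w .twobar m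
/-- `G1 n a b` is the number of complete Gessel words of length `2n` with exactly one
`1̄`, located at (1-indexed) position `a`, and exactly one `1`, at position `b`. -/
noncomputable def G1 (n a b : ℕ) : ℕ :=
  ((Finset.univ : Finset (Fin (2 * n) → GLetter)).filter
    (fun w => IsGessel (2 * n) w ∧ IsCompleteGW (2 * n) w ∧
      (∀ t : Fin (2 * n), (w t = .onebar ↔ (t : ℕ) + 1 = a) ∧
        (w t = .one ↔ (t : ℕ) + 1 = b)))).card

lemma cnt_zero (m : ℕ) (w : Fin m → GLetter) (x : GLetter) : cnt m w x 0 = 0 := by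
  simp [cnt]

lemma cnt_succ (m : ℕ) (w : Fin m → GLetter) (x : GLetter) (k : ℕ) (h : k < m) :
    cnt m w x (k + 1) = cnt m w x k + if w ⟨k, h⟩ = x then 1 else 0 := by
  unfold cnt
  split_ifs with hx
  · rw [show (Finset.univ.filter (fun i : Fin m => (i : ℕ) < k + 1 ∧ w i = x))
        = insert ⟨k, h⟩ (Finset.univ.filter (fun i : Fin m => (i : ℕ) < k ∧ w i = x)) from ?_]
    · rw [Finset.card_insert_of_notMem (by simp)]
    · ext i
      simp only [Finset.mem_insert, Finset.mem_filter, Finset.mem_univ, true_and]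
      constructor
      · rintro ⟨hik, hwx⟩
        rcases Nat.lt_succ_iff_lt_or_eq.1 hik with h' | h'
        · exact Or.inr ⟨h', hwx⟩
        · exact Or.inl (Fin.ext h')
      · rintro (rfl | ⟨hik, hwx⟩)
        · exact ⟨Nat.lt_succ_self _, hx⟩
        · exact ⟨Nat.lt_succ_of_lt hik, hwx⟩
  · have he : (Finset.univ.filter (fun i : Fin m => (i : ℕ) < k + 1 ∧ w i = x))
        = Finset.univ.filter (fun i : Fin m => (i : ℕ) < k ∧ w i = x) := by
      ext i
      simp only [Finset.mem_filter, Finset.mem_univ, true_and]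
      constructor
      · rintro ⟨hik, hwx⟩
        refine ⟨?_, hwx⟩
        rcases Nat.lt_succ_iff_lt_or_eq.1 hik with h' | h'
        · exact h'
        · exact absurd hwx (by rw [show i = ⟨k, h⟩ from Fin.ext h']; exact hx)
      · rintro ⟨hik, hwx⟩
        exact ⟨Nat.lt_succ_of_lt hik, hwx⟩
    rw [he]
    omega

lemma cnt_comp_eq (m : ℕ) (w : Fin m → GLetter) (σ : Equiv.Perm (Fin m)) (x : GLetter) (k : ℕ)
    (hσ : ∀ i : Fin m, ((σ i : ℕ) < k ↔ (i : ℕ) < k)) :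
    cnt m (w ∘ σ) x k = cnt m w x k := by
  unfold cnt
  apply Finset.card_bij (fun i _ => σ i)
  · intro a ha
    simp only [Finset.mem_filter, Finset.mem_univ, true_and, Function.comp_apply] at ha ⊢
    exact ⟨(hσ a).2 ha.1, ha.2⟩
  · intro a _ b _ h
    exact σ.injective h
  · intro b hb
    simp only [Finset.mem_filter, Finset.mem_univ, true_and, Function.comp_apply] at hb ⊢
    refine ⟨σ.symm b, ⟨?_, ?_⟩, σ.apply_symm_apply b⟩
    · have := hσ (σ.symm b)
      rw [σ.apply_symm_apply] at this
      exact this.1 hb.1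
    · rw [σ.apply_symm_apply]; exact hb.2

lemma cnt_comp_swap (m : ℕ) (w : Fin m → GLetter) (x : GLetter) (k : ℕ) (p q : Fin m)
    (hpq : ((p : ℕ) < k ↔ (q : ℕ) < k)) :
    cnt m (w ∘ Equiv.swap p q) x k = cnt m w x k := by
  apply cnt_comp_eq
  intro i
  rcases eq_or_ne i p with rfl | hip
  · rw [Equiv.swap_apply_left]; exact hpq.symm
  rcases eq_or_ne i q with rfl | hiq
  · rw [Equiv.swap_apply_right]; exact hpq
  · rw [Equiv.swap_apply_of_ne_of_ne hip hiq]

lemma cnt_total (m : ℕ) (w : Fin m → GLetter) :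
    ∀ k, k ≤ m → cnt m w .one k + cnt m w .two k + cnt m w .onebar k + cnt m w .twobar k = k := by
  intro k
  induction k with
  | zero => intro _; simp [cnt_zero]
  | succ k ih =>
    intro h
    have hk : k < m := h
    rw [cnt_succ m w _ k hk, cnt_succ m w _ k hk, cnt_succ m w _ k hk, cnt_succ m w _ k hk,
      ]
    have := ih (le_of_lt hk)
    cases hw : w ⟨k, hk⟩ <;> simp [hw] <;> omega

lemma cnt_letter_eq (m b : ℕ) (w : Fin m → GLetter) (x : GLetter) (k : ℕ)
    (hb : 1 ≤ b) (hbm : b ≤ m)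
    (hpos : ∀ t : Fin m, w t = x ↔ (t : ℕ) + 1 = b) :
    cnt m w x k = if b ≤ k then 1 else 0 := by
  unfold cnt
  split_ifs with h
  · rw [show (Finset.univ.filter (fun i : Fin m => (i : ℕ) < k ∧ w i = x))
        = {(⟨b - 1, by omega⟩ : Fin m)} from ?_]
    · simp
    · ext i
      simp only [Finset.mem_filter, Finset.mem_univ, true_and, Finset.mem_singleton, hpos i,
        Fin.ext_iff]
      omega
  · rw [Finset.card_eq_zero.2 ?_]
    ext i
    simp only [Finset.mem_filter, Finset.mem_univ, true_and, Finset.notMem_empty, iff_false,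
      not_and, hpos i]
    omega

lemma cnt_comp_swap_crit (m c : ℕ) (h1 : c < m) (h2 : c + 1 < m)
    (w : Fin m → GLetter) (x : GLetter) :
    cnt m (w ∘ Equiv.swap ⟨c, h1⟩ ⟨c + 1, h2⟩) x (c + 1)
      = cnt m w x c + (if w ⟨c + 1, h2⟩ = x then 1 else 0) := by
  rw [cnt_succ m _ x c h1]
  have hval : (w ∘ Equiv.swap (⟨c, h1⟩ : Fin m) ⟨c + 1, h2⟩) ⟨c, h1⟩ = w ⟨c + 1, h2⟩ := by
    simp [Equiv.swap_apply_left]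
  rw [hval, cnt_comp_swap m w x c _ _ (by simp only [Fin.val_mk]; omega)]

lemma isGessel_comp_swap (m c : ℕ) (h1 : c < m) (h2 : c + 1 < m) (w : Fin m → GLetter)
    (hg : IsGessel m w)
    (hcrit : cnt m (w ∘ Equiv.swap ⟨c, h1⟩ ⟨c + 1, h2⟩) .twobar (c + 1) ≤
        cnt m (w ∘ Equiv.swap ⟨c, h1⟩ ⟨c + 1, h2⟩) .two (c + 1) ∧
      cnt m (w ∘ Equiv.swap ⟨c, h1⟩ ⟨c + 1, h2⟩) .onebar (c + 1) +
        cnt m (w ∘ Equiv.swap ⟨c, h1⟩ ⟨c + 1, h2⟩) .twobar (c + 1) ≤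
      cnt m (w ∘ Equiv.swap ⟨c, h1⟩ ⟨c + 1, h2⟩) .one (c + 1) +
        cnt m (w ∘ Equiv.swap ⟨c, h1⟩ ⟨c + 1, h2⟩) .two (c + 1)) :
    IsGessel m (w ∘ Equiv.swap ⟨c, h1⟩ ⟨c + 1, h2⟩) := by
  intro k hk
  by_cases hkc : k = c + 1
  · subst hkc; exact hcrit
  · have hpq : (((⟨c, h1⟩ : Fin m) : ℕ) < k ↔ ((⟨c + 1, h2⟩ : Fin m) : ℕ) < k) := by
      simp only [Fin.val_mk]; omega
    rw [cnt_comp_swap m w _ k _ _ hpq, cnt_comp_swap m w _ k _ _ hpq,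
      cnt_comp_swap m w _ k _ _ hpq, cnt_comp_swap m w _ k _ _ hpq]
    exact hg k hk

lemma isComplete_comp_swap (m : ℕ) (w : Fin m → GLetter) (p q : Fin m)
    (hcw : IsCompleteGW m w) : IsCompleteGW m (w ∘ Equiv.swap p q) := by
  have hpq : ((p : ℕ) < m ↔ (q : ℕ) < m) := by simp [p.is_lt, q.is_lt]
  unfold IsCompleteGW
  rw [cnt_comp_swap m w _ m _ _ hpq, cnt_comp_swap m w _ m _ _ hpq,
    cnt_comp_swap m w _ m _ _ hpq, cnt_comp_swap m w _ m _ _ hpq]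
  exact hcw

lemma mem_b_fwd (m a c : ℕ) (ha : 1 ≤ a) (hab : a < c + 1) (hbE : (c + 1) % 2 = 0)
    (hbm : c + 1 + 1 ≤ m) (w : Fin m → GLetter)
    (hg : IsGessel m w) (hcw : IsCompleteGW m w)
    (hpos : ∀ t : Fin m, (w t = .onebar ↔ (t : ℕ) + 1 = a) ∧ (w t = .one ↔ (t : ℕ) + 1 = c + 1)) :
    IsGessel m (w ∘ Equiv.swap ⟨c, by omega⟩ ⟨c + 1, by omega⟩) ∧
    IsCompleteGW m (w ∘ Equiv.swap ⟨c, by omega⟩ ⟨c + 1, by omega⟩) ∧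
    ∀ t : Fin m, ((w ∘ Equiv.swap ⟨c, by omega⟩ ⟨c + 1, by omega⟩) t = .onebar ↔ (t : ℕ) + 1 = a) ∧
      ((w ∘ Equiv.swap ⟨c, by omega⟩ ⟨c + 1, by omega⟩) t = .one ↔ (t : ℕ) + 1 = c + 1 + 1) := by
  have hc1 : c < m := by omega
  have hc2 : c + 1 < m := by omega
  have hwp : w ⟨c, hc1⟩ = .one := (hpos ⟨c, hc1⟩).2.mpr (by simp)
  have hq1 : w ⟨c + 1, hc2⟩ ≠ .one := fun h => by
    have := (hpos ⟨c + 1, hc2⟩).2.mp h; simp only [Fin.val_mk] at this; omega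
  have hqb : w ⟨c + 1, hc2⟩ ≠ .onebar := fun h => by
    have := (hpos ⟨c + 1, hc2⟩).1.mp h; simp only [Fin.val_mk] at this; omega
  refine ⟨?_, isComplete_comp_swap m w _ _ hcw, ?_⟩
  · apply isGessel_comp_swap m c hc1 hc2 w hg
    simp only [cnt_comp_swap_crit m c hc1 hc2 w]
    have hone : cnt m w GLetter.one c = 0 := by
      rw [cnt_letter_eq m (c + 1) w .one c (by omega) (by omega) (fun t => (hpos t).2),
        if_neg (by omega)]
    have honebar : cnt m w GLetter.onebar c = 1 := by
      rw [cnt_letter_eq m a w .onebar c ha (by omega) (fun t => (hpos t).1), if_pos (by omega)]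
    have htot := cnt_total m w c (by omega)
    have hgc := hg c (by omega)
    cases hq : w ⟨c + 1, hc2⟩ with
    | one => exact absurd hq hq1
    | onebar => exact absurd hq hqb
    | two => simp only [hq, reduceCtorEq, if_false, if_true]; omega
    | twobar => simp only [hq, reduceCtorEq, if_false, if_true]; omega
  · intro t
    have hval : (w ∘ Equiv.swap (⟨c, hc1⟩ : Fin m) ⟨c + 1, hc2⟩) t =
        if t = ⟨c, hc1⟩ then w ⟨c + 1, hc2⟩ else if t = ⟨c + 1, hc2⟩ then w ⟨c, hc1⟩ else w t := by
      rw [Function.comp_apply, Equiv.swap_apply_def]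
      split_ifs <;> rfl
    rw [hval]
    split_ifs with h1 h2
    · subst h1
      simp only [Fin.val_mk]
      exact ⟨⟨fun h => absurd h hqb, fun h => absurd h (by omega)⟩,
        ⟨fun h => absurd h hq1, fun h => absurd h (by omega)⟩⟩
    · subst h2
      simp only [Fin.val_mk, hwp]
      refine ⟨⟨fun h => absurd h (by decide), fun h => absurd h (by omega)⟩, ?_⟩
      trivial
    · have ht1 : (t : ℕ) ≠ c := fun hh => h1 (Fin.ext hh)
      have ht2 : (t : ℕ) ≠ c + 1 := fun hh => h2 (Fin.ext hh)
      exact ⟨(hpos t).1,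
        ⟨fun h => absurd ((hpos t).2.mp h) (by omega), fun h => absurd h (by omega)⟩⟩

lemma mem_b_rev (m a c : ℕ) (ha : 1 ≤ a) (hab : a < c + 1)
    (hbm : c + 1 + 1 ≤ m) (w : Fin m → GLetter)
    (hg : IsGessel m w) (hcw : IsCompleteGW m w)
    (hpos : ∀ t : Fin m, (w t = .onebar ↔ (t : ℕ) + 1 = a) ∧
      (w t = .one ↔ (t : ℕ) + 1 = c + 1 + 1)) :
    IsGessel m (w ∘ Equiv.swap ⟨c, by omega⟩ ⟨c + 1, by omega⟩) ∧
    IsCompleteGW m (w ∘ Equiv.swap ⟨c, by omega⟩ ⟨c + 1, by omega⟩) ∧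
    ∀ t : Fin m, ((w ∘ Equiv.swap ⟨c, by omega⟩ ⟨c + 1, by omega⟩) t = .onebar ↔ (t : ℕ) + 1 = a) ∧
      ((w ∘ Equiv.swap ⟨c, by omega⟩ ⟨c + 1, by omega⟩) t = .one ↔ (t : ℕ) + 1 = c + 1) := by
  have hc1 : c < m := by omega
  have hc2 : c + 1 < m := by omega
  have hwq : w ⟨c + 1, hc2⟩ = .one := (hpos ⟨c + 1, hc2⟩).2.mpr (by simp)
  have hp1 : w ⟨c, hc1⟩ ≠ .one := fun h => by
    have := (hpos ⟨c, hc1⟩).2.mp h; simp only [Fin.val_mk] at this; omega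
  have hpb : w ⟨c, hc1⟩ ≠ .onebar := fun h => by
    have := (hpos ⟨c, hc1⟩).1.mp h; simp only [Fin.val_mk] at this; omega
  refine ⟨?_, isComplete_comp_swap m w _ _ hcw, ?_⟩
  · apply isGessel_comp_swap m c hc1 hc2 w hg
    simp only [cnt_comp_swap_crit m c hc1 hc2 w]
    have hone : cnt m w GLetter.one c = 0 := by
      rw [cnt_letter_eq m (c + 1 + 1) w .one c (by omega) (by omega) (fun t => (hpos t).2),
        if_neg (by omega)]
    have honebar : cnt m w GLetter.onebar c = 1 := by
      rw [cnt_letter_eq m a w .onebar c ha (by omega) (fun t => (hpos t).1), if_pos (by omega)]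
    have hgc := hg c (by omega)
    simp only [hwq, reduceCtorEq, if_false, if_true]
    omega
  · intro t
    have hval : (w ∘ Equiv.swap (⟨c, hc1⟩ : Fin m) ⟨c + 1, hc2⟩) t =
        if t = ⟨c, hc1⟩ then w ⟨c + 1, hc2⟩ else if t = ⟨c + 1, hc2⟩ then w ⟨c, hc1⟩ else w t := by
      rw [Function.comp_apply, Equiv.swap_apply_def]
      split_ifs <;> rfl
    rw [hval]
    split_ifs with h1 h2
    · subst h1
      simp only [Fin.val_mk, hwq]
      refine ⟨⟨fun h => absurd h (by decide), fun h => absurd h (by omega)⟩, ?_⟩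
      trivial
    · subst h2
      simp only [Fin.val_mk]
      exact ⟨⟨fun h => absurd h hpb, fun h => absurd h (by omega)⟩,
        ⟨fun h => absurd h hp1, fun h => absurd h (by omega)⟩⟩
    · have ht1 : (t : ℕ) ≠ c := fun hh => h1 (Fin.ext hh)
      have ht2 : (t : ℕ) ≠ c + 1 := fun hh => h2 (Fin.ext hh)
      exact ⟨(hpos t).1,
        ⟨fun h => absurd ((hpos t).2.mp h) (by omega), fun h => absurd h (by omega)⟩⟩

lemma mem_a_fwd (m b c : ℕ) (hc : 1 ≤ c) (haE : (c + 1) % 2 = 0) (hab : c + 1 + 1 < b)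
    (hbm : b ≤ m) (w : Fin m → GLetter)
    (hg : IsGessel m w) (hcw : IsCompleteGW m w)
    (hpos : ∀ t : Fin m, (w t = .onebar ↔ (t : ℕ) + 1 = c + 1) ∧ (w t = .one ↔ (t : ℕ) + 1 = b)) :
    IsGessel m (w ∘ Equiv.swap ⟨c, by omega⟩ ⟨c + 1, by omega⟩) ∧
    IsCompleteGW m (w ∘ Equiv.swap ⟨c, by omega⟩ ⟨c + 1, by omega⟩) ∧
    ∀ t : Fin m, ((w ∘ Equiv.swap ⟨c, by omega⟩ ⟨c + 1, by omega⟩) t = .onebar ↔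
        (t : ℕ) + 1 = c + 1 + 1) ∧
      ((w ∘ Equiv.swap ⟨c, by omega⟩ ⟨c + 1, by omega⟩) t = .one ↔ (t : ℕ) + 1 = b) := by
  have hc1 : c < m := by omega
  have hc2 : c + 1 < m := by omega
  have hwp : w ⟨c, hc1⟩ = .onebar := (hpos ⟨c, hc1⟩).1.mpr (by simp)
  have hq1 : w ⟨c + 1, hc2⟩ ≠ .one := fun h => by
    have := (hpos ⟨c + 1, hc2⟩).2.mp h; simp only [Fin.val_mk] at this; omega
  have hqb : w ⟨c + 1, hc2⟩ ≠ .onebar := fun h => by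
    have := (hpos ⟨c + 1, hc2⟩).1.mp h; simp only [Fin.val_mk] at this; omega
  refine ⟨?_, isComplete_comp_swap m w _ _ hcw, ?_⟩
  · apply isGessel_comp_swap m c hc1 hc2 w hg
    simp only [cnt_comp_swap_crit m c hc1 hc2 w]
    have hone : cnt m w GLetter.one c = 0 := by
      rw [cnt_letter_eq m b w .one c (by omega) hbm (fun t => (hpos t).2), if_neg (by omega)]
    have honebar : cnt m w GLetter.onebar c = 0 := by
      rw [cnt_letter_eq m (c + 1) w .onebar c (by omega) (by omega) (fun t => (hpos t).1),
        if_neg (by omega)]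
    have htot := cnt_total m w c (by omega)
    have hgc := hg c (by omega)
    cases hq : w ⟨c + 1, hc2⟩ with
    | one => exact absurd hq hq1
    | onebar => exact absurd hq hqb
    | two => simp only [hq, reduceCtorEq, if_false, if_true]; omega
    | twobar => simp only [hq, reduceCtorEq, if_false, if_true]; omega
  · intro t
    have hval : (w ∘ Equiv.swap (⟨c, hc1⟩ : Fin m) ⟨c + 1, hc2⟩) t =
        if t = ⟨c, hc1⟩ then w ⟨c + 1, hc2⟩ else if t = ⟨c + 1, hc2⟩ then w ⟨c, hc1⟩ else w t := by
      rw [Function.comp_apply, Equiv.swap_apply_def]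
      split_ifs <;> rfl
    rw [hval]
    split_ifs with h1 h2
    · subst h1
      simp only [Fin.val_mk]
      exact ⟨⟨fun h => absurd h hqb, fun h => absurd h (by omega)⟩,
        ⟨fun h => absurd h hq1, fun h => absurd h (by omega)⟩⟩
    · subst h2
      simp only [Fin.val_mk, hwp]
      refine ⟨?_, ⟨fun h => absurd h (by decide), fun h => absurd h (by omega)⟩⟩
      trivial
    · have ht1 : (t : ℕ) ≠ c := fun hh => h1 (Fin.ext hh)
      have ht2 : (t : ℕ) ≠ c + 1 := fun hh => h2 (Fin.ext hh)
      exact ⟨⟨fun h => absurd ((hpos t).1.mp h) (by omega), fun h => absurd h (by omega)⟩,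
        (hpos t).2⟩

lemma mem_a_rev (m b c : ℕ) (hc : 1 ≤ c) (haE : (c + 1) % 2 = 0) (hab : c + 1 + 1 < b)
    (hbm : b ≤ m) (w : Fin m → GLetter)
    (hg : IsGessel m w) (hcw : IsCompleteGW m w)
    (hpos : ∀ t : Fin m, (w t = .onebar ↔ (t : ℕ) + 1 = c + 1 + 1) ∧
      (w t = .one ↔ (t : ℕ) + 1 = b)) :
    IsGessel m (w ∘ Equiv.swap ⟨c, by omega⟩ ⟨c + 1, by omega⟩) ∧
    IsCompleteGW m (w ∘ Equiv.swap ⟨c, by omega⟩ ⟨c + 1, by omega⟩) ∧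
    ∀ t : Fin m, ((w ∘ Equiv.swap ⟨c, by omega⟩ ⟨c + 1, by omega⟩) t = .onebar ↔
        (t : ℕ) + 1 = c + 1) ∧
      ((w ∘ Equiv.swap ⟨c, by omega⟩ ⟨c + 1, by omega⟩) t = .one ↔ (t : ℕ) + 1 = b) := by
  have hc1 : c < m := by omega
  have hc2 : c + 1 < m := by omega
  have hwq : w ⟨c + 1, hc2⟩ = .onebar := (hpos ⟨c + 1, hc2⟩).1.mpr (by simp)
  have hp1 : w ⟨c, hc1⟩ ≠ .one := fun h => by
    have := (hpos ⟨c, hc1⟩).2.mp h; simp only [Fin.val_mk] at this; omega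
  have hpb : w ⟨c, hc1⟩ ≠ .onebar := fun h => by
    have := (hpos ⟨c, hc1⟩).1.mp h; simp only [Fin.val_mk] at this; omega
  refine ⟨?_, isComplete_comp_swap m w _ _ hcw, ?_⟩
  · apply isGessel_comp_swap m c hc1 hc2 w hg
    simp only [cnt_comp_swap_crit m c hc1 hc2 w]
    have hone : cnt m w GLetter.one c = 0 := by
      rw [cnt_letter_eq m b w .one c (by omega) hbm (fun t => (hpos t).2), if_neg (by omega)]
    have honebar : cnt m w GLetter.onebar c = 0 := by
      rw [cnt_letter_eq m (c + 1 + 1) w .onebar c (by omega) (by omega) (fun t => (hpos t).1),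
        if_neg (by omega)]
    have htot := cnt_total m w c (by omega)
    have hgc := hg c (by omega)
    simp only [hwq, reduceCtorEq, if_false, if_true]
    omega
  · intro t
    have hval : (w ∘ Equiv.swap (⟨c, hc1⟩ : Fin m) ⟨c + 1, hc2⟩) t =
        if t = ⟨c, hc1⟩ then w ⟨c + 1, hc2⟩ else if t = ⟨c + 1, hc2⟩ then w ⟨c, hc1⟩ else w t := by
      rw [Function.comp_apply, Equiv.swap_apply_def]
      split_ifs <;> rfl
    rw [hval]
    split_ifs with h1 h2
    · subst h1
      simp only [Fin.val_mk, hwq]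
      refine ⟨?_, ⟨fun h => absurd h (by decide), fun h => absurd h (by omega)⟩⟩
      trivial
    · subst h2
      simp only [Fin.val_mk]
      exact ⟨⟨fun h => absurd h hpb, fun h => absurd h (by omega)⟩,
        ⟨fun h => absurd h hp1, fun h => absurd h (by omega)⟩⟩
    · have ht1 : (t : ℕ) ≠ c := fun hh => h1 (Fin.ext hh)
      have ht2 : (t : ℕ) ≠ c + 1 := fun hh => h2 (Fin.ext hh)
      exact ⟨⟨fun h => absurd ((hpos t).1.mp h) (by omega), fun h => absurd h (by omega)⟩,
        (hpos t).2⟩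

lemma G1_succ_b (n a c : ℕ) (ha : 1 ≤ a) (hab : a < c + 1) (hbE : (c + 1) % 2 = 0)
    (hbm : c + 1 + 1 ≤ 2 * n) :
    G1 n a (c + 1) = G1 n a (c + 1 + 1) := by
  have hc1 : c < 2 * n := by omega
  have hc2 : c + 1 < 2 * n := by omega
  unfold G1
  apply Finset.card_nbij' (fun w => w ∘ Equiv.swap ⟨c, hc1⟩ ⟨c + 1, hc2⟩)
    (fun w => w ∘ Equiv.swap ⟨c, hc1⟩ ⟨c + 1, hc2⟩)
  · intro w hw
    simp only [Finset.mem_coe, Finset.mem_filter, Finset.mem_univ, true_and] at hw ⊢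
    exact mem_b_fwd (2 * n) a c ha hab hbE hbm w hw.1 hw.2.1 hw.2.2
  · intro w hw
    simp only [Finset.mem_coe, Finset.mem_filter, Finset.mem_univ, true_and] at hw ⊢
    exact mem_b_rev (2 * n) a c ha hab hbm w hw.1 hw.2.1 hw.2.2
  · intro w _
    funext t
    simp [Equiv.swap_apply_self]
  · intro w _
    funext t
    simp [Equiv.swap_apply_self]

lemma G1_succ_a (n b c : ℕ) (hc : 1 ≤ c) (haE : (c + 1) % 2 = 0) (hab : c + 1 + 1 < b)
    (hbm : b ≤ 2 * n) :
    G1 n (c + 1) b = G1 n (c + 1 + 1) b := by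
  have hc1 : c < 2 * n := by omega
  have hc2 : c + 1 < 2 * n := by omega
  unfold G1
  apply Finset.card_nbij' (fun w => w ∘ Equiv.swap ⟨c, hc1⟩ ⟨c + 1, hc2⟩)
    (fun w => w ∘ Equiv.swap ⟨c, hc1⟩ ⟨c + 1, hc2⟩)
  · intro w hw
    simp only [Finset.mem_coe, Finset.mem_filter, Finset.mem_univ, true_and] at hw ⊢
    exact mem_a_fwd (2 * n) b c hc haE hab hbm w hw.1 hw.2.1 hw.2.2
  · intro w hw
    simp only [Finset.mem_coe, Finset.mem_filter, Finset.mem_univ, true_and] at hw ⊢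
    exact mem_a_rev (2 * n) b c hc haE hab hbm w hw.1 hw.2.1 hw.2.2
  · intro w _
    funext t
    simp [Equiv.swap_apply_self]
  · intro w _
    funext t
    simp [Equiv.swap_apply_self]


/-- The counts of complete Gessel words with `1̄` at position `2i` or `2i+1`
and `1` at position `2j` or `2j+1` all agree, for `1 ≤ i < j ≤ n-1`. -/
theorem gessel_diamond (n i j : ℕ) (hi : 1 ≤ i) (hij : i < j) (hj : j ≤ n - 1) :
    G1 n (2 * i) (2 * j) = G1 n (2 * i) (2 * j + 1) ∧
    G1 n (2 * i) (2 * j) = G1 n (2 * i + 1) (2 * j) ∧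
    G1 n (2 * i) (2 * j) = G1 n (2 * i + 1) (2 * j + 1) := by
  have hn : 3 ≤ n := by omega
  have e1 : G1 n (2 * i) (2 * j) = G1 n (2 * i) (2 * j + 1) := by
    have := G1_succ_b n (2 * i) (2 * j - 1) (by omega) (by omega) (by omega) (by omega)
    rw [show 2 * j - 1 + 1 = 2 * j from by omega] at this
    exact this
  have e2 : G1 n (2 * i) (2 * j) = G1 n (2 * i + 1) (2 * j) := by
    have := G1_succ_a n (2 * j) (2 * i - 1) (by omega) (by omega) (by omega) (by omega)
    rw [show 2 * i - 1 + 1 = 2 * i from by omega] at this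
    exact this
  have e3 : G1 n (2 * i + 1) (2 * j) = G1 n (2 * i + 1) (2 * j + 1) := by
    have := G1_succ_b n (2 * i + 1) (2 * j - 1) (by omega) (by omega) (by omega) (by omega)
    rw [show 2 * j - 1 + 1 = 2 * j from by omega] at this
    exact this
  exact ⟨e1, e2, e2.trans e3⟩
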